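/- arXiv:2509.16034 — 2 statements merged into one kernel-verified Lean document; each statement's English description precedes it below -/
import Mathlib

section
/- For every integer n ≥ 2, m_{2n+1} = 2n − M_{n+1}, where m_k (resp. M_k) is the minimum (resp. maximum) number of alternations among length-k factors of the Thue–Morse sequence. -/
/-- The reduction of a word: replace each maximal run of identical characters
by a single character. -/
def red {α : Type*} [DecidableEq α] (w : List α) : List α :=
  w.destutter (· ≠ ·)

/-- The length-`k` factor of the infinite sequence `x` (1-indexed) starting at
position `i`. -/
def factorAt {α : Type*} (x : ℕ → α) (i k : ℕ) : List α :=
  (List.range k).map (fun j => x (i + j))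

/-- The reduced factor complexity: the number of length-`n` factors of `x`,
counted up to reduced-equivalence (`red v = red w`). -/
noncomputable def redFactorComplexity {α : Type*} [DecidableEq α]
    (x : ℕ → α) (n : ℕ) : ℕ :=
  Set.ncard { u : List α | ∃ i ≥ 1, u = red (factorAt x i n) }

/-- The Thue–Morse sequence (1-indexed): `t n` is the parity of the number of
1's in the binary expansion of `n - 1`. -/
def thueMorse (n : ℕ) : Bool :=
  decide ((Nat.digits 2 (n - 1)).sum % 2 = 1)

/-- The number of alternations (occurrences of 01 or 10) in a binary word. -/
def alt (w : List Bool) : ℕ :=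
  (List.zipWith (fun a b => a != b) w w.tail).count true

/-- The minimum number of alternations among length-`k` factors of Thue–Morse. -/
noncomputable def tmAltMin (k : ℕ) : ℕ :=
  sInf { a : ℕ | ∃ i ≥ 1, a = alt (factorAt thueMorse i k) }

/-- The maximum number of alternations among length-`k` factors of Thue–Morse. -/
noncomputable def tmAltMax (k : ℕ) : ℕ :=
  sSup { a : ℕ | ∃ i ≥ 1, a = alt (factorAt thueMorse i k) }

/-- The Thue–Morse morphism `0 → 01`, `1 → 10`. -/
def mu (w : List Bool) : List Bool :=
  w.flatMap (fun b => if b then [true, false] else [false, true])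

/-- The regular paperfolding sequence (1-indexed): writing `n = n' * 2^k` with
`n'` odd, `f n = 1` iff `n' ≡ 3 (mod 4)`. -/
def paperfold (n : ℕ) : Bool :=
  decide ((n / 2 ^ (n.factorization 2)) % 4 = 3)

/-- The reduced abelian complexity: the number of length-`n` factors of `x`,
counted up to the equivalence identifying `v` and `w` whenever `red v` is a
rearrangement of the characters of `red w`. -/
noncomputable def redAbelianComplexity {α : Type*} [DecidableEq α]
    (x : ℕ → α) (n : ℕ) : ℕ :=
  Set.ncard { m : Multiset α | ∃ i ≥ 1, m = ↑(red (factorAt x i n)) }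

lemma alt_cons₂ (a b : Bool) (l : List Bool) :
    alt (a :: b :: l) = (if a ≠ b then 1 else 0) + alt (b :: l) := by
  simp [alt, List.count_cons]
  cases a <;> cases b <;> simp [Nat.add_comm]

lemma mu_cons (b : Bool) (u : List Bool) : mu (b :: u) = b :: (!b) :: mu u := by
  cases b <;> simp [mu]

lemma altA (a : Bool) (u : List Bool) :
    alt (mu (a :: u)) + alt (a :: u) + 1 = 2 * (a :: u).length := by
  induction u generalizing a with
  | nil => cases a <;> decide
  | cons b l ih =>
    have h := ih b
    rw [mu_cons] at h
    rw [mu_cons, mu_cons, alt_cons₂ a (!a), alt_cons₂ (!a) b, alt_cons₂ a b]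
    cases a <;> cases b <;> simp at * <;> omega

lemma altB (u : List Bool) (hu : u ≠ []) : alt ((mu u).tail) + 1 = alt (mu u) := by
  obtain ⟨a, v, rfl⟩ := List.exists_cons_of_ne_nil hu
  rw [mu_cons, alt_cons₂]
  cases a <;> simp [Nat.add_comm]

lemma altC' (u : List Bool) (hu : u ≠ []) (h : Bool) :
    alt (h :: (mu u).dropLast) + 1 = alt (h :: mu u) := by
  induction u generalizing h with
  | nil => simp at hu
  | cons c u' ih =>
    cases u' with
    | nil => rw [mu_cons]; cases c <;> cases h <;> decide
    | cons d l =>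
      rw [mu_cons]
      have hne : mu (d :: l) ≠ [] := by rw [mu_cons]; simp
      have h1 : (c :: (!c) :: mu (d :: l)).dropLast = c :: (!c) :: (mu (d :: l)).dropLast := by
        rw [List.dropLast_cons_of_ne_nil (by simp), List.dropLast_cons_of_ne_nil hne]
      rw [h1, alt_cons₂ h c, alt_cons₂ c (!c), alt_cons₂ h c, alt_cons₂ c (!c)]
      have := ih (by simp) (!c)
      omega

lemma altC (u : List Bool) (hu : u ≠ []) : alt ((mu u).dropLast) + 1 = alt (mu u) := by
  obtain ⟨c, u', rfl⟩ := List.exists_cons_of_ne_nil hu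
  cases u' with
  | nil => rw [mu_cons]; cases c <;> decide
  | cons d l =>
    rw [mu_cons]
    have hne : mu (d :: l) ≠ [] := by rw [mu_cons]; simp
    rw [List.dropLast_cons_of_ne_nil (by simp), List.dropLast_cons_of_ne_nil hne,
      alt_cons₂ c (!c), alt_cons₂ c (!c)]
    have := altC' (d :: l) (by simp) (!c)
    omega

lemma factorAt_cons {α : Type*} (x : ℕ → α) (i k : ℕ) :
    factorAt x i (k + 1) = x i :: factorAt x (i + 1) k := by
  simp only [factorAt, List.range_succ_eq_map, List.map_cons, List.map_map, Nat.add_zero]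
  congr 1
  congr 1
  funext j
  simp only [Function.comp_apply, Nat.succ_eq_add_one]
  congr 1
  omega

lemma factorAt_tail {α : Type*} (x : ℕ → α) (i k : ℕ) :
    (factorAt x i (k + 1)).tail = factorAt x (i + 1) k := by
  rw [factorAt_cons]; rfl

lemma factorAt_dropLast {α : Type*} (x : ℕ → α) (i k : ℕ) :
    (factorAt x i (k + 1)).dropLast = factorAt x i k := by
  simp [factorAt, List.range_succ]

lemma factorAt_ne_nil {α : Type*} (x : ℕ → α) (i k : ℕ) :
    factorAt x i (k + 1) ≠ [] := by
  rw [factorAt_cons]; simp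

lemma tm_even (j : ℕ) : thueMorse (2 * j + 1) = thueMorse (j + 1) := by
  rcases Nat.eq_zero_or_pos j with rfl | hj
  · rfl
  · unfold thueMorse
    simp only [Nat.add_sub_cancel]
    rw [Nat.digits_def' (by norm_num : 1 < 2) (by omega)]
    simp [Nat.mul_div_cancel_left _ (by norm_num : 0 < 2), Nat.mul_mod_right]

lemma tm_odd (j : ℕ) : thueMorse (2 * j + 2) = ! thueMorse (j + 1) := by
  unfold thueMorse
  have h1 : 2 * j + 2 - 1 = 2 * j + 1 := by omega
  rw [h1, Nat.add_sub_cancel, Nat.digits_def' (by norm_num : 1 < 2) (by omega)]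
  have h2 : (2 * j + 1) % 2 = 1 := by omega
  have h3 : (2 * j + 1) / 2 = j := by omega
  rw [h2, h3]
  simp only [List.sum_cons]
  rcases Nat.mod_two_eq_zero_or_one (Nat.digits 2 j).sum with h | h <;> simp [Nat.add_mod, h]

lemma mu_factor (j k : ℕ) :
    factorAt thueMorse (2 * j + 1) (2 * k) = mu (factorAt thueMorse (j + 1) k) := by
  induction k generalizing j with
  | zero => simp [factorAt, mu]
  | succ k ih =>
    have e1 : 2 * (k + 1) = (2 * k + 1) + 1 := by ring
    rw [e1, factorAt_cons, factorAt_cons, factorAt_cons, mu_cons]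
    have e2 : 2 * j + 1 + 1 = 2 * j + 2 := rfl
    have e3 : 2 * j + 2 + 1 = 2 * (j + 1) + 1 := by ring
    rw [e2, e3, ih (j + 1), tm_even, tm_odd]

lemma alt_le_tail (v : List Bool) : alt v ≤ v.tail.length := by
  refine le_trans List.count_le_length ?_
  rw [List.length_zipWith]
  exact min_le_right _ _

lemma key (j n : ℕ) :
    alt (factorAt thueMorse (2 * j + 1) (2 * n + 1))
      + alt (factorAt thueMorse (j + 1) (n + 1)) = 2 * n ∧
    alt (factorAt thueMorse (2 * j + 2) (2 * n + 1))
      + alt (factorAt thueMorse (j + 1) (n + 1)) = 2 * n := by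
  set u := factorAt thueMorse (j + 1) (n + 1) with hu_def
  have hu : u ≠ [] := factorAt_ne_nil _ _ _
  obtain ⟨a, v, hav⟩ := List.exists_cons_of_ne_nil hu
  have hmu : mu u = factorAt thueMorse (2 * j + 1) (2 * (n + 1)) := (mu_factor j (n + 1)).symm
  have hlen : u.length = n + 1 := by simp [hu_def, factorAt]
  have hA : alt (mu u) + alt u + 1 = 2 * u.length := by rw [hav]; exact altA a v
  have hB := altB u hu
  have hC := altC u hu
  have h1 : factorAt thueMorse (2 * j + 1) (2 * n + 1) = (mu u).dropLast := by
    rw [hmu, show 2 * (n + 1) = (2 * n + 1) + 1 by ring, factorAt_dropLast]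
  have h2 : factorAt thueMorse (2 * j + 2) (2 * n + 1) = (mu u).tail := by
    rw [hmu, show 2 * (n + 1) = (2 * n + 1) + 1 by ring, factorAt_tail]
  rw [h1, h2]
  omega

theorem stmt4 (n : ℕ) (hn : 2 ≤ n) :
    tmAltMin (2 * n + 1) = 2 * n - tmAltMax (n + 1) := by
  unfold tmAltMin tmAltMax
  set S := { a : ℕ | ∃ i ≥ 1, a = alt (factorAt thueMorse i (n + 1)) } with hS_def
  set T := { a : ℕ | ∃ i ≥ 1, a = alt (factorAt thueMorse i (2 * n + 1)) } with hT_def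
  have hSne : S.Nonempty := ⟨_, 1, le_refl 1, rfl⟩
  have hSbdd : ∀ a ∈ S, a ≤ n := by
    rintro a ⟨i, hi, rfl⟩
    have h := alt_le_tail (factorAt thueMorse i (n + 1))
    rw [factorAt_tail] at h
    simpa [factorAt] using h
  have hBdd : BddAbove S := ⟨n, hSbdd⟩
  have hM : sSup S ∈ S := Nat.sSup_mem hSne hBdd
  apply le_antisymm
  · obtain ⟨i, hi, hMi⟩ := hM
    obtain ⟨j, rfl⟩ : ∃ j, i = j + 1 := ⟨i - 1, by omega⟩
    have hk := (key j n).1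
    exact Nat.sInf_le ⟨2 * j + 1, by omega, by omega⟩
  · refine le_csInf ⟨_, 1, le_refl 1, rfl⟩ ?_
    rintro b ⟨i, hi, rfl⟩
    obtain ⟨j, hj⟩ : ∃ j, i = 2 * j + 1 ∨ i = 2 * j + 2 := ⟨(i - 1) / 2, by omega⟩
    have ha : alt (factorAt thueMorse (j + 1) (n + 1)) ≤ sSup S :=
      le_csSup hBdd ⟨j + 1, by omega, rfl⟩
    have hk := key j n
    rcases hj with rfl | rfl
    · omega
    · omega
end

section
/- For every integer n ≥ 2, M_{2n+1} = 2n − m_{n+1}, where m_k (resp. M_k) is the minimum (resp. maximum) number of alternations among length-k factors of the Thue–Morse sequence. -/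
def P (m : ℕ) : Bool := decide ((Nat.digits 2 m).sum % 2 = 1)

lemma P_two_mul (q : ℕ) : P (2 * q) = P q := by
  rcases Nat.eq_zero_or_pos q with h | h
  · simp [h]
  · have : Nat.digits 2 (2 * q) = (2 * q) % 2 :: Nat.digits 2 ((2 * q) / 2) :=
      Nat.digits_def' (by norm_num) (by omega)
    simp [P, this, Nat.mul_div_cancel_left, Nat.mul_mod_right]

lemma P_two_mul_add_one (q : ℕ) : P (2 * q + 1) = !P q := by
  have : Nat.digits 2 (2 * q + 1) = (2 * q + 1) % 2 :: Nat.digits 2 ((2 * q + 1) / 2) :=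
    Nat.digits_def' (by norm_num) (by omega)
  have h2 : (2 * q + 1) % 2 = 1 := by omega
  have h3 : (2 * q + 1) / 2 = q := by omega
  by_cases h : (Nat.digits 2 q).sum % 2 = 1 <;>
    simp [P, this, h2, h3, Nat.add_mod, h] <;> omega

lemma pd_odd (m : ℕ) : (thueMorse (2*m+1) != thueMorse (2*m+1+1)) = true := by
  have e1 : thueMorse (2*m+1) = P (2*m) := rfl
  have e2 : thueMorse (2*m+1+1) = P (2*m+1) := rfl
  rw [e1, e2, P_two_mul, P_two_mul_add_one]
  cases P m <;> rfl

lemma pd_even (m : ℕ) (h : 1 ≤ m) :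
    (thueMorse (2*m) != thueMorse (2*m+1)) = !(thueMorse m != thueMorse (m+1)) := by
  obtain ⟨k, rfl⟩ : ∃ k, m = k + 1 := ⟨m - 1, by omega⟩
  have e1 : thueMorse (2*(k+1)) = P (2*k+1) := by
    have : 2*(k+1) - 1 = 2*k+1 := by omega
    simp [thueMorse, P, this]
  have e2 : thueMorse (2*(k+1)+1) = P (2*(k+1)) := rfl
  have e3 : thueMorse (k+1) = P k := rfl
  have e4 : thueMorse (k+1+1) = P (k+1) := rfl
  rw [e1, e2, e3, e4, P_two_mul_add_one, P_two_mul]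
  cases P k <;> cases P (k+1) <;> rfl

def F (i k : ℕ) : ℕ :=
  (List.range k).countP (fun j => thueMorse (i + j) != thueMorse (i + j + 1))

lemma factorAt_succ {α : Type*} (x : ℕ → α) (i k : ℕ) :
    factorAt x i (k+1) = x i :: factorAt x (i+1) k := by
  unfold factorAt
  rw [List.range_succ_eq_map, List.map_cons, List.map_map]
  refine congrArg₂ _ rfl ?_
  apply List.map_congr_left
  intro a _
  show x (i + (a+1)) = x (i+1+a)
  congr 1; omega

lemma alt_cons_cons (a b : Bool) (l : List Bool) :
    alt (a :: b :: l) = (a != b).toNat + alt (b :: l) := by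
  cases a <;> cases b <;> simp [alt, List.count_cons, Nat.add_comm]

lemma F_zero (i : ℕ) : F i 0 = 0 := rfl

lemma F_succ (i k : ℕ) :
    F i (k+1) = F i k + (thueMorse (i+k) != thueMorse (i+k+1)).toNat := by
  simp only [F, List.range_succ, List.countP_append, List.countP_cons, List.countP_nil]
  cases h : (thueMorse (i+k) != thueMorse (i+k+1)) <;> simp [h]

lemma F_head (i k : ℕ) :
    F i (k+1) = (thueMorse i != thueMorse (i+1)).toNat + F (i+1) k := by
  simp only [F, List.range_succ_eq_map, List.countP_cons, List.countP_map, Nat.add_zero]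
  have hc : List.countP ((fun j => thueMorse (i+j) != thueMorse (i+j+1)) ∘ Nat.succ)
      (List.range k)
      = List.countP (fun j => thueMorse (i+1+j) != thueMorse (i+1+j+1)) (List.range k) := by
    apply List.countP_congr
    intro a _
    have e1 : i + (a+1) = i+1+a := by omega
    simp [Function.comp, Nat.succ_eq_add_one, e1]
  rw [hc]
  rcases Bool.dichotomy (thueMorse i != thueMorse (i+1)) with h | h
  · simp_all [Nat.add_comm]
  · simp_all [Nat.add_comm]
    have hb : (thueMorse i != thueMorse (i+1)) = true := by simpa [bne_iff_ne] using h
    rw [hb]; rfl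

lemma F_le (i k : ℕ) : F i k ≤ k := by
  have := List.countP_le_length (l := List.range k)
    (p := fun j => thueMorse (i + j) != thueMorse (i + j + 1))
  simpa [F] using this

lemma alt_factorAt (i k : ℕ) : alt (factorAt thueMorse i (k+1)) = F i k := by
  induction k generalizing i with
  | zero => rfl
  | succ k ih =>
      rw [factorAt_succ, factorAt_succ, alt_cons_cons, ← factorAt_succ, ih, F_head]

lemma key_even (n a : ℕ) (ha : 1 ≤ a) : F (2*a) (2*n) = 2*n - F a n := by
  induction n with
  | zero => norm_num [F_zero]
  | succ n ih =>
      have e2 : 2*(n+1) = (2*n+1)+1 := by ring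
      rw [e2, F_succ, F_succ]
      rw [show (2*a : ℕ) + (2*n+1) = 2*(a+n)+1 from by ring, pd_odd]
      rw [show (2*a : ℕ) + (2*n) = 2*(a+n) from by ring, pd_even (a+n) (by omega)]
      rw [ih, F_succ a n]
      have hle := F_le a n
      rcases Bool.dichotomy (thueMorse (a+n) != thueMorse (a+n+1)) with h | h <;>
        rw [h] <;> simp [Bool.toNat] <;> omega

lemma key_odd (n a : ℕ) : F (2*a+1) (2*n) = 2*n - F (a+1) n := by
  induction n with
  | zero => norm_num [F_zero]
  | succ n ih =>
      have e2 : 2*(n+1) = (2*n+1)+1 := by ring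
      rw [e2, F_succ, F_succ]
      rw [show (2*a+1 : ℕ) + (2*n+1) = 2*(a+n+1) from by ring, pd_even (a+n+1) (by omega)]
      rw [show (2*a+1 : ℕ) + (2*n) = 2*(a+n)+1 from by ring, pd_odd]
      rw [ih, F_succ (a+1) n]
      rw [show (a+1+n : ℕ) = a+n+1 from by ring]
      have hle := F_le (a+1) n
      rcases Bool.dichotomy (thueMorse (a+n+1) != thueMorse (a+n+1+1)) with h | h <;>
        rw [h] <;> simp [Bool.toNat] <;> omega

theorem stmt5 (n : ℕ) (hn : 2 ≤ n) :
    tmAltMax (2 * n + 1) = 2 * n - tmAltMin (n + 1) := by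
  have key : {a : ℕ | ∃ i ≥ 1, a = alt (factorAt thueMorse i (2*n+1))}
      = {a : ℕ | ∃ i ≥ 1, a = 2*n - alt (factorAt thueMorse i (n+1))} := by
    ext x
    simp only [Set.mem_setOf_eq]
    constructor
    · rintro ⟨i, hi, rfl⟩
      rw [alt_factorAt i (2*n)]
      rcases Nat.even_or_odd i with ⟨a, rfl⟩ | ⟨a, rfl⟩
      · have ha : 1 ≤ a := by omega
        refine ⟨a, ha, ?_⟩
        rw [alt_factorAt a n, show (a + a : ℕ) = 2*a from by ring]
        exact key_even n a ha
      · refine ⟨a+1, by omega, ?_⟩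
        rw [alt_factorAt (a+1) n]
        exact key_odd n a
    · rintro ⟨i, hi, rfl⟩
      refine ⟨2*i, by omega, ?_⟩
      rw [alt_factorAt (2*i) (2*n), alt_factorAt i n]
      exact (key_even n i hi).symm
  unfold tmAltMax tmAltMin
  rw [key]
  set T := {a : ℕ | ∃ i ≥ 1, a = alt (factorAt thueMorse i (n+1))} with hT
  have hTne : T.Nonempty := ⟨alt (factorAt thueMorse 1 (n+1)), 1, le_refl 1, rfl⟩
  obtain ⟨i0, hi0, he0⟩ := Nat.sInf_mem hTne
  have hub : ∀ x ∈ {a : ℕ | ∃ i ≥ 1, a = 2*n - alt (factorAt thueMorse i (n+1))},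
      x ≤ 2*n - sInf T := by
    rintro x ⟨i, hi, rfl⟩
    have h := Nat.sInf_le (show alt (factorAt thueMorse i (n+1)) ∈ T from ⟨i, hi, rfl⟩)
    omega
  have hmem2 : 2*n - sInf T ∈ {a : ℕ | ∃ i ≥ 1, a = 2*n - alt (factorAt thueMorse i (n+1))} :=
    ⟨i0, hi0, by rw [← he0]⟩
  apply le_antisymm
  · exact csSup_le ⟨_, hmem2⟩ hub
  · exact le_csSup ⟨2*n - sInf T, hub⟩ hmem2
end
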